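/- Let b₁, b₂, c₁, c₂ > 0 with c₁/b₁ ≥ c₂/b₂, and let S : [0,∞) → [0,∞) be any function (the claim process path). Define X₁(t) = c₁t - b₁S(t), X₂(t) = c₂t - b₂S(t), and the offsets Oᵢ(t) = sup_{0≤s≤t} Xᵢ(s) - Xᵢ(t). Then for all t ≥ 0, (b₁/b₂)·O₂(t) ≥ O₁(t). -/
import Mathlib


/-- Pathwise offset comparison in the degenerate bivariate risk model: with
`Xᵢ(t) = cᵢt - bᵢS(t)` and offsets `Oᵢ(t) = sup_{0≤s≤t} Xᵢ(s) - Xᵢ(t)`, the condition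
`c₁/b₁ ≥ c₂/b₂` implies `(b₁/b₂)·O₂(t) ≥ O₁(t)` for all `t ≥ 0`. -/
theorem stmt_9 (b₁ b₂ c₁ c₂ : ℝ) (hb₁ : 0 < b₁) (hb₂ : 0 < b₂) (hc₁ : 0 < c₁) (hc₂ : 0 < c₂)
    (hrat : c₁ / b₁ ≥ c₂ / b₂) (S : ℝ → ℝ) (hS : ∀ s, 0 ≤ s → 0 ≤ S s) (t : ℝ) (ht : 0 ≤ t) :
    (b₁ / b₂) * (sSup ((fun s => c₂ * s - b₂ * S s) '' Set.Icc 0 t) - (c₂ * t - b₂ * S t))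
      ≥ sSup ((fun s => c₁ * s - b₁ * S s) '' Set.Icc 0 t) - (c₁ * t - b₁ * S t) := by
  set k := b₁ / b₂ with hk
  have hkpos : 0 < k := div_pos hb₁ hb₂
  have hcross : c₂ * b₁ ≤ c₁ * b₂ := by
    rw [ge_iff_le, div_le_div_iff₀ hb₂ hb₁] at hrat
    exact hrat
  have hd : 0 ≤ c₁ - k * c₂ := by
    rw [hk, sub_nonneg, div_mul_eq_mul_div, div_le_iff₀ hb₂]
    linarith
  set d := c₁ - k * c₂ with hdd
  set f₂ : ℝ → ℝ := fun s => c₂ * s - b₂ * S s with hf₂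
  set f₁ : ℝ → ℝ := fun s => c₁ * s - b₁ * S s with hf₁
  have hid : ∀ s : ℝ, f₁ s = k * f₂ s + d * s := by
    intro s
    simp only [hf₁, hf₂, hdd, hk]
    field_simp
    ring
  have hne : (f₂ '' Set.Icc 0 t).Nonempty := ⟨f₂ 0, ⟨0, Set.left_mem_Icc.mpr ht, rfl⟩⟩
  have hne1 : (f₁ '' Set.Icc 0 t).Nonempty := ⟨f₁ 0, ⟨0, Set.left_mem_Icc.mpr ht, rfl⟩⟩
  by_cases hbdd : BddAbove (f₂ '' Set.Icc 0 t)
  · have hle : sSup (f₁ '' Set.Icc 0 t) ≤ k * sSup (f₂ '' Set.Icc 0 t) + d * t := by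
      apply csSup_le hne1
      rintro x ⟨s, hs, rfl⟩
      have h2 : f₂ s ≤ sSup (f₂ '' Set.Icc 0 t) := le_csSup hbdd ⟨s, hs, rfl⟩
      have h3 := mul_le_mul_of_nonneg_left h2 hkpos.le
      have hds : d * s ≤ d * t := mul_le_mul_of_nonneg_left hs.2 hd
      rw [hid s]
      linarith
    have h1t := hid t
    show sSup (f₁ '' Set.Icc 0 t) - f₁ t ≤ k * (sSup (f₂ '' Set.Icc 0 t) - f₂ t)
    rw [mul_sub]
    linarith
  · have hbdd1 : ¬ BddAbove (f₁ '' Set.Icc 0 t) := by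
      intro ⟨M, hM⟩
      apply hbdd
      refine ⟨M / k, ?_⟩
      rintro x ⟨s, hs, rfl⟩
      have h1 : f₁ s ≤ M := hM ⟨s, hs, rfl⟩
      have hds : 0 ≤ d * s := mul_nonneg hd hs.1
      rw [hid s] at h1
      rw [le_div_iff₀ hkpos]
      linarith [mul_comm (f₂ s) k]
    rw [Real.sSup_of_not_bddAbove hbdd, Real.sSup_of_not_bddAbove hbdd1]
    have h1t := hid t
    have hdt : 0 ≤ d * t := mul_nonneg hd ht
    show (0:ℝ) - f₁ t ≤ k * (0 - f₂ t)
    rw [mul_sub, mul_zero]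
    linarith
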